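/- Let 1 ≤ k ≤ n, let λ₁,…,λₙ ∈ ℂ be pairwise distinct, and let Q(z₁,…,z_k) be a homogeneous polynomial. Then ∑_σ Q(λ_{σ(1)},…,λ_{σ(k)}) / ∏_{m=1}^{k} ∏_{i ∉ {σ(1),…,σ(m)}} (λ_i − λ_{σ(m)}) — the sum running over all injective maps σ : {1,…,k} → {1,…,n}, the inner product over all i ∈ {1,…,n} not in the image of {1,…,m} under σ — equals the iterated residue at infinity Res_{z₁=∞} ⋯ Res_{z_k=∞} [ ∏_{1 ≤ m < l ≤ k} (z_m − z_l) · Q(z₁,…,z_k) / ∏_{l=1}^{k} ∏_{i=1}^{n} (λ_i − z_l) ] dz₁⋯dz_k, which concretely means: for all sufficiently large R₁ > 0, then for all sufficiently large R₂, …, then for all sufficiently large R_k, the left-hand side equals (−1)^k · (1/(2πi))^k ∮_{|z₁|=R₁} ⋯ ∮_{|z_k|=R_k} [∏_{m<l}(z_m − z_l) · Q(z)] / [∏_{l=1}^{k}∏_{i=1}^{n}(λ_i − z_l)] dz_k⋯dz₁, over positively oriented circles. -/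

import Mathlib

open Polynomial MvPolynomial

/-- The iterated contour integral
`∮_{|z₁|=R₁} ⋯ ∮_{|z_k|=R_k} f(z₁,…,z_k) dz_k ⋯ dz₁`
over positively oriented circles, the outermost integral being taken in the first variable. -/
noncomputable def iteratedCircleIntegral : (k : ℕ) → ((Fin k → ℂ) → ℂ) → (Fin k → ℝ) → ℂ
  | 0, f, _ => f ![]
  | k + 1, f, R =>
      ∮ z in C(0, R 0), iteratedCircleIntegral k (fun w => f (Fin.cons z w)) (fun j => R j.succ)

/-- `NestedLarge k P` says: for all sufficiently large `R₁`, then for all sufficiently large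
`R₂` (depending on `R₁`), …, then for all sufficiently large `R_k` (depending on the previous
radii), the predicate `P (R₁,…,R_k)` holds. -/
def NestedLarge : (k : ℕ) → ((Fin k → ℝ) → Prop) → Prop
  | 0, P => P ![]
  | k + 1, P => ∃ T : ℝ, ∀ R : ℝ, T ≤ R → NestedLarge k fun Rs => P (Fin.cons R Rs)

open Polynomial Finset

lemma exists_antideriv (P : ℂ[X]) : ∃ T : ℂ[X], T.derivative = P := by
  induction P using Polynomial.induction_on' with
  | add p q hp hq =>
      obtain ⟨T, hT⟩ := hp; obtain ⟨S, hS⟩ := hq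
      exact ⟨T + S, by simp [hT, hS]⟩
  | monomial n a =>
      refine ⟨monomial (n + 1) (a / (n + 1)), ?_⟩
      rw [Polynomial.derivative_monomial]
      simp only [Nat.add_sub_cancel, Nat.cast_add, Nat.cast_one]
      rw [div_mul_cancel₀ a (Nat.cast_add_one_ne_zero n)]

lemma circleIntegral_polynomial (P : ℂ[X]) {R : ℝ} (hR : 0 ≤ R) :
    (∮ z in C(0, R), P.eval z) = 0 := by
  obtain ⟨T, hT⟩ := exists_antideriv P
  refine circleIntegral.integral_eq_zero_of_hasDerivWithinAt
    (f := fun z => T.eval z) hR fun z _ => ?_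
  simpa [hT] using (T.hasDerivAt z).hasDerivWithinAt

lemma circleIntegral_add {f g : ℂ → ℂ} {c : ℂ} {R : ℝ}
    (hf : CircleIntegrable f c R) (hg : CircleIntegrable g c R) :
    (∮ z in C(c, R), (f z + g z)) = (∮ z in C(c, R), f z) + ∮ z in C(c, R), g z := by
  simp only [circleIntegral, smul_add]
  exact intervalIntegral.integral_add hf.out hg.out

lemma circleIntegrable_sum {ι : Type*} (s : Finset ι) (f : ι → ℂ → ℂ) (c : ℂ) (R : ℝ)
    (h : ∀ i ∈ s, CircleIntegrable (f i) c R) :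
    CircleIntegrable (fun z => ∑ i ∈ s, f i z) c R := by
  classical
  induction s using Finset.induction_on with
  | empty => simpa using circleIntegrable_const (0 : ℂ) c R
  | insert a s' hx ih =>
      simp only [Finset.sum_insert hx]
      exact (h a (Finset.mem_insert_self _ _)).add
        (ih fun i hi => h i (Finset.mem_insert_of_mem hi))

lemma circleIntegral_finset_sum {ι : Type*} (s : Finset ι) (f : ι → ℂ → ℂ) (c : ℂ) (R : ℝ)
    (h : ∀ i ∈ s, CircleIntegrable (f i) c R) :
    (∮ z in C(c, R), ∑ i ∈ s, f i z) = ∑ i ∈ s, ∮ z in C(c, R), f i z := by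
  classical
  induction s using Finset.induction_on with
  | empty => simp [circleIntegral]
  | insert a s' hx ih =>
      simp only [Finset.sum_insert hx]
      rw [circleIntegral_add (h a (Finset.mem_insert_self _ _))
        (circleIntegrable_sum s' f c R fun i hi => h i (Finset.mem_insert_of_mem hi)),
        ih fun i hi => h i (Finset.mem_insert_of_mem hi)]

open Finset

-- pointwise partial fraction for 1/prod
lemma inv_prod_eq_sum {n : ℕ} (hn : 0 < n) (lam : Fin n → ℂ) (hlam : Function.Injective lam)
    (z : ℂ) (hz : ∀ i, lam i - z ≠ 0) :
    (∏ i, (lam i - z))⁻¹ =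
      ∑ j, (∏ i ∈ univ.erase j, (lam i - lam j))⁻¹ * (lam j - z)⁻¹ := by
  have hbasis := Lagrange.sum_basis (s := (univ : Finset (Fin n))) (v := lam)
    hlam.injOn ⟨⟨0, hn⟩, mem_univ _⟩
  have h1 : (1 : ℂ) = ∑ j, ∏ i ∈ univ.erase j, ((lam i - lam j)⁻¹ * (lam i - z)) := by
    have := congrArg (fun p => Polynomial.eval z p) hbasis
    simp only [Polynomial.eval_finset_sum, Lagrange.basis, Lagrange.basisDivisor,
      Polynomial.eval_prod, Polynomial.eval_mul, Polynomial.eval_C, Polynomial.eval_sub,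
      Polynomial.eval_X, Polynomial.eval_one] at this
    rw [← this]
    refine Finset.sum_congr rfl fun j _ => Finset.prod_congr rfl fun i _ => ?_
    rw [show lam j - lam i = -(lam i - lam j) by ring, show z - lam i = -(lam i - z) by ring,
      inv_neg, neg_mul_neg]
  have key : (1 : ℂ) = ∑ j, (∏ i ∈ univ.erase j, (lam i - lam j))⁻¹ *
      ∏ i ∈ univ.erase j, (lam i - z) := by
    rw [h1]
    refine Finset.sum_congr rfl fun j _ => ?_
    rw [Finset.prod_mul_distrib, ← Finset.prod_inv_distrib]
  have hA : (∏ i, (lam i - z)) ≠ 0 := Finset.prod_ne_zero_iff.mpr fun i _ => hz i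
  have hrw : ∀ j : Fin n, (lam j - z)⁻¹ = (∏ i ∈ univ.erase j, (lam i - z)) / ∏ i, (lam i - z) := by
    intro j
    have hprod : (∏ i ∈ univ.erase j, (lam i - z)) ≠ 0 :=
      Finset.prod_ne_zero_iff.mpr fun i _ => hz i
    rw [← Finset.mul_prod_erase _ _ (mem_univ j), eq_div_iff (mul_ne_zero (hz j) hprod),
      ← mul_assoc, inv_mul_cancel₀ (hz j), one_mul]
  calc (∏ i, (lam i - z))⁻¹ = 1 / ∏ i, (lam i - z) := (one_div _).symm
    _ = (∑ j, (∏ i ∈ univ.erase j, (lam i - lam j))⁻¹ * ∏ i ∈ univ.erase j, (lam i - z)) /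
        ∏ i, (lam i - z) := by rw [← key]
    _ = ∑ j, (∏ i ∈ univ.erase j, (lam i - lam j))⁻¹ * (lam j - z)⁻¹ := by
        rw [Finset.sum_div]
        exact Finset.sum_congr rfl fun j _ => by rw [hrw j, mul_div_assoc]

lemma lemB {n : ℕ} (lam : Fin n → ℂ) (hlam : Function.Injective lam) (P : ℂ[X])
    {R : ℝ} (hR : 0 < R) (h : ∀ i, ‖lam i‖ < R) :
    (∮ z in C(0, R), P.eval z / ∏ i, (lam i - z)) =
      -(2 * Real.pi * Complex.I) *
        ∑ j, P.eval (lam j) / ∏ i ∈ univ.erase j, (lam i - lam j) := by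
  rcases Nat.eq_zero_or_pos n with hn | hn
  · subst hn
    simp only [Finset.univ_eq_empty, Finset.prod_empty, Finset.sum_empty, div_one, mul_zero]
    exact circleIntegral_polynomial P hR.le
  -- choose quotient polynomials
  have hDex : ∀ j : Fin n, ∃ D : ℂ[X], P - Polynomial.C (P.eval (lam j)) = (Polynomial.X - Polynomial.C (lam j)) * D :=
    fun j => Polynomial.X_sub_C_dvd_sub_C_eval
  choose D hD using hDex
  set c : Fin n → ℂ := fun j => (∏ i ∈ univ.erase j, (lam i - lam j))⁻¹ with hc
  have hzsphere : ∀ z ∈ Metric.sphere (0 : ℂ) R, ∀ i, lam i - z ≠ 0 := by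
    intro z hz i hcon
    have : lam i = z := by linear_combination hcon
    rw [mem_sphere_iff_norm, sub_zero] at hz
    rw [← this] at hz
    exact absurd hz (ne_of_lt (h i))
  -- pointwise identity on the sphere
  have hpt : Set.EqOn (fun z => P.eval z / ∏ i, (lam i - z))
      (fun z => ∑ j, ((-(c j * P.eval (lam j))) * (z - lam j)⁻¹ + (-(c j)) * (D j).eval z))
      (Metric.sphere (0 : ℂ) R) := by
    intro z hz
    have hnz := hzsphere z hz
    have hinv := inv_prod_eq_sum hn lam hlam z hnz
    have hPj : ∀ j : Fin n, P.eval z * (lam j - z)⁻¹ =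
        P.eval (lam j) * (lam j - z)⁻¹ - (D j).eval z := by
      intro j
      have he := congrArg (fun q => Polynomial.eval z q) (hD j)
      simp only [Polynomial.eval_sub, Polynomial.eval_mul, Polynomial.eval_C,
        Polynomial.eval_X] at he
      have hj := hnz j
      rw [show Polynomial.eval z P =
        Polynomial.eval (lam j) P + (z - lam j) * Polynomial.eval z (D j) by linear_combination he]
      have hm1 : (z - lam j) * (lam j - z)⁻¹ = -1 := by
        rw [show z - lam j = -(lam j - z) by ring, neg_mul, mul_inv_cancel₀ hj]
      linear_combination Polynomial.eval z (D j) * hm1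
    show P.eval z / ∏ i, (lam i - z) = _
    rw [div_eq_mul_inv, hinv, Finset.mul_sum]
    refine Finset.sum_congr rfl fun j _ => ?_
    rw [show P.eval z * ((∏ i ∈ univ.erase j, (lam i - lam j))⁻¹ * (lam j - z)⁻¹) =
      (∏ i ∈ univ.erase j, (lam i - lam j))⁻¹ * (P.eval z * (lam j - z)⁻¹) by ring, hPj j]
    rw [show lam j - z = -(z - lam j) by ring, inv_neg]
    ring
  rw [circleIntegral.integral_congr hR.le hpt]
  -- integrability of each summand
  have hint : ∀ j : Fin n, CircleIntegrable
      (fun z => (-(c j * P.eval (lam j))) * (z - lam j)⁻¹ + (-(c j)) * (D j).eval z) 0 R := by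
    intro j
    apply ContinuousOn.circleIntegrable hR.le
    apply ContinuousOn.add
    · apply ContinuousOn.mul continuousOn_const
      apply ContinuousOn.inv₀ ((continuous_id.sub continuous_const).continuousOn)
      intro z hz
      have := hzsphere z hz j
      intro hcon
      simp only [Pi.sub_apply, id_eq] at hcon
      exact this (by linear_combination -hcon)
    · exact continuousOn_const.mul ((D j).continuous.continuousOn)
  rw [circleIntegral_finset_sum univ _ 0 R fun j _ => hint j]
  have hterm : ∀ j : Fin n,
      (∮ z in C(0, R), ((-(c j * P.eval (lam j))) * (z - lam j)⁻¹ + (-(c j)) * (D j).eval z)) =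
      (-(c j * P.eval (lam j))) * (2 * Real.pi * Complex.I) := by
    intro j
    have h1 : CircleIntegrable (fun z => (-(c j * P.eval (lam j))) * (z - lam j)⁻¹) 0 R := by
      apply ContinuousOn.circleIntegrable hR.le
      apply ContinuousOn.mul continuousOn_const
      apply ContinuousOn.inv₀ ((continuous_id.sub continuous_const).continuousOn)
      intro z hz
      have := hzsphere z hz j
      intro hcon
      simp only [Pi.sub_apply, id_eq] at hcon
      exact this (by linear_combination -hcon)
    have h2 : CircleIntegrable (fun z => (-(c j)) * (D j).eval z) 0 R :=
      ContinuousOn.circleIntegrable hR.le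
        (continuousOn_const.mul ((D j).continuous.continuousOn))
    rw [circleIntegral_add h1 h2, circleIntegral.integral_const_mul,
      circleIntegral.integral_const_mul]
    have hmem : lam j ∈ Metric.ball (0 : ℂ) R := by
      rw [Metric.mem_ball, dist_zero_right]
      exact h j
    rw [circleIntegral.integral_sub_inv_of_mem_ball hmem,
      circleIntegral_polynomial (D j) hR.le, mul_zero, add_zero]
  rw [Finset.sum_congr rfl fun j _ => hterm j]
  rw [Finset.mul_sum]
  refine Finset.sum_congr rfl fun j _ => ?_
  rw [div_eq_mul_inv]
  ring

lemma iter_const_mul : ∀ (k : ℕ) (c : ℂ) (f : (Fin k → ℂ) → ℂ) (R : Fin k → ℝ),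
    iteratedCircleIntegral k (fun z => c * f z) R = c * iteratedCircleIntegral k f R := by
  intro k
  induction k with
  | zero => intro c f R; rfl
  | succ k ih =>
      intro c f R
      show (∮ z in C(0, R 0),
          iteratedCircleIntegral k (fun w => c * f (Fin.cons z w)) fun j => R j.succ) = _
      simp only [ih]
      exact circleIntegral.integral_const_mul _ _ _ _

lemma iter_congr : ∀ (k : ℕ) (f g : (Fin k → ℂ) → ℂ) (R : Fin k → ℝ),
    (∀ z, f z = g z) →
    iteratedCircleIntegral k f R = iteratedCircleIntegral k g R := by
  intro k f g R h
  have : f = g := funext h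
  rw [this]

lemma claim (n : ℕ) (lam : Fin n → ℂ) (hlam : Function.Injective lam) :
    ∀ (k : ℕ) (F : MvPolynomial (Fin k) ℂ) (R : Fin k → ℝ),
      (∀ l, 0 < R l ∧ ∀ i, ‖lam i‖ < R l) →
      iteratedCircleIntegral k (fun z => MvPolynomial.eval z F / ∏ l, ∏ i, (lam i - z l)) R =
        (-(2 * Real.pi * Complex.I)) ^ k *
          ∑ σ : Fin k → Fin n, MvPolynomial.eval (fun m => lam (σ m)) F /
            ∏ l, ∏ i ∈ Finset.univ.erase (σ l), (lam i - lam (σ l)) := by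
  intro k
  induction k with
  | zero =>
      intro F R _
      show MvPolynomial.eval ![] F / ∏ l : Fin 0, ∏ i, (lam i - (![] : Fin 0 → ℂ) l) = _
      rw [pow_zero, one_mul, Fintype.sum_unique]
      simp only [Finset.univ_eq_empty, Finset.prod_empty, div_one]
      have h0 : (fun m => lam ((default : Fin 0 → Fin n) m) : Fin 0 → ℂ) = ![] :=
        Subsingleton.elim _ _
      rw [h0]
  | succ k ih =>
      intro F R hR
      obtain ⟨hR0, hRlam⟩ := hR 0
      have hGw : ∀ (z : ℂ) (w : Fin k → ℂ), MvPolynomial.eval (Fin.cons z w) F =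
          MvPolynomial.eval w (Polynomial.eval (MvPolynomial.C z)
            (MvPolynomial.finSuccEquiv ℂ k F)) := by
        intro z w
        rw [MvPolynomial.eval_eq_eval_mv_eval', Polynomial.eval_map]
        have h := Polynomial.eval₂_at_apply (p := MvPolynomial.finSuccEquiv ℂ k F)
          (MvPolynomial.eval w) (MvPolynomial.C z)
        simpa using h
      have hPval : ∀ (z : ℂ) (τ : Fin k → Fin n),
          MvPolynomial.eval (fun m => lam (τ m))
              (Polynomial.eval (MvPolynomial.C z) (MvPolynomial.finSuccEquiv ℂ k F)) =
            (Polynomial.map (MvPolynomial.eval fun m => lam (τ m))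
              (MvPolynomial.finSuccEquiv ℂ k F)).eval z := by
        intro z τ
        rw [← hGw z (fun m => lam (τ m))]
        exact MvPolynomial.eval_eq_eval_mv_eval' _ _ _
      set Pt : ℂ[X] := ∑ τ : Fin k → Fin n,
        Polynomial.C (∏ l, ∏ i ∈ Finset.univ.erase (τ l), (lam i - lam (τ l)))⁻¹ *
          Polynomial.map (MvPolynomial.eval fun m => lam (τ m))
            (MvPolynomial.finSuccEquiv ℂ k F) with hPt
      have hPtz : ∀ z : ℂ, Pt.eval z = ∑ τ : Fin k → Fin n,
          (∏ l, ∏ i ∈ Finset.univ.erase (τ l), (lam i - lam (τ l)))⁻¹ *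
            (Polynomial.map (MvPolynomial.eval fun m => lam (τ m))
              (MvPolynomial.finSuccEquiv ℂ k F)).eval z := by
        intro z
        rw [hPt, Polynomial.eval_finset_sum]
        exact Finset.sum_congr rfl fun τ _ => by rw [Polynomial.eval_mul, Polynomial.eval_C]
      have hmain : ∀ z : ℂ,
          iteratedCircleIntegral k
            (fun w : Fin k → ℂ => MvPolynomial.eval (Fin.cons z w) F /
              ∏ l : Fin (k + 1), ∏ i, (lam i - (Fin.cons z w : Fin (k + 1) → ℂ) l)) (fun j => R j.succ) =
          (-(2 * Real.pi * Complex.I)) ^ k * (Pt.eval z / ∏ i, (lam i - z)) := by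
        intro z
        have step1 : ∀ w : Fin k → ℂ,
            MvPolynomial.eval (Fin.cons z w) F /
              ∏ l : Fin (k + 1), ∏ i, (lam i - (Fin.cons z w : Fin (k + 1) → ℂ) l) =
            (∏ i, (lam i - z))⁻¹ *
              (MvPolynomial.eval w (Polynomial.eval (MvPolynomial.C z)
                  (MvPolynomial.finSuccEquiv ℂ k F)) /
                ∏ l : Fin k, ∏ i, (lam i - w l)) := by
          intro w
          rw [Fin.prod_univ_succ]
          simp only [Fin.cons_zero, Fin.cons_succ]
          rw [hGw z w, div_eq_mul_inv, mul_inv, div_eq_mul_inv]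
          ring
        rw [iter_congr _ _ _ _ step1, iter_const_mul,
          ih (Polynomial.eval (MvPolynomial.C z) (MvPolynomial.finSuccEquiv ℂ k F))
            (fun j => R j.succ) (fun l => hR l.succ)]
        rw [hPtz z]
        simp only [hPval]
        simp only [Finset.mul_sum, Finset.sum_div]
        refine Finset.sum_congr rfl fun τ _ => ?_
        simp only [div_eq_mul_inv]
        ring
      show (∮ z in C(0, R 0), iteratedCircleIntegral k
          (fun w : Fin k → ℂ => MvPolynomial.eval (Fin.cons z w) F /
            ∏ l : Fin (k + 1), ∏ i, (lam i - (Fin.cons z w : Fin (k + 1) → ℂ) l)) fun j => R j.succ) = _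
      rw [circleIntegral.integral_congr hR0.le fun z _ => hmain z]
      rw [circleIntegral.integral_const_mul, lemB lam hlam Pt hR0 hRlam]
      have hsum : ∑ σ : Fin (k + 1) → Fin n, MvPolynomial.eval (fun m => lam (σ m)) F /
          ∏ l, ∏ i ∈ Finset.univ.erase (σ l), (lam i - lam (σ l)) =
          ∑ j : Fin n, Pt.eval (lam j) / ∏ i ∈ Finset.univ.erase j, (lam i - lam j) := by
        rw [← Equiv.sum_comp (Fin.consEquiv (fun _ : Fin (k + 1) => Fin n)), Fintype.sum_prod_type]
        refine Finset.sum_congr rfl fun j _ => ?_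
        rw [hPtz (lam j), Finset.sum_div]
        refine Finset.sum_congr rfl fun τ _ => ?_
        have harg : (fun m => lam ((Fin.consEquiv (fun _ : Fin (k + 1) => Fin n)) (j, τ) m)) =
            Fin.cons (lam j) (fun m => lam (τ m)) := by
          refine funext (Fin.cases ?_ fun m => ?_) <;> simp [Fin.consEquiv]
        rw [harg, hGw (lam j) (fun m => lam (τ m)), hPval (lam j) τ]
        have hden : ∏ l : Fin (k + 1), ∏ i ∈ Finset.univ.erase
              ((Fin.consEquiv (fun _ : Fin (k + 1) => Fin n)) (j, τ) l),
              (lam i - lam ((Fin.consEquiv (fun _ : Fin (k + 1) => Fin n)) (j, τ) l)) =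
            (∏ i ∈ Finset.univ.erase j, (lam i - lam j)) *
              ∏ l : Fin k, ∏ i ∈ Finset.univ.erase (τ l), (lam i - lam (τ l)) := by
          rw [Fin.prod_univ_succ]
          simp [Fin.consEquiv]
        rw [hden, div_eq_mul_inv, div_eq_mul_inv, mul_inv]
        ring
      rw [hsum, pow_succ]
      ring

lemma nestedLarge_of_forall : ∀ (k : ℕ) (P : (Fin k → ℝ) → Prop) (T : ℝ),
    (∀ R : Fin k → ℝ, (∀ l, T ≤ R l) → P R) → NestedLarge k P := by
  intro k
  induction k with
  | zero => exact fun P T h => h ![] fun l => l.elim0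
  | succ k ih =>
      intro P T h
      exact ⟨T, fun R hTR => ih _ T fun Rs hRs =>
        h (Fin.cons R Rs) fun l => Fin.cases hTR hRs l⟩


/-- Proposition 4.9 of Bérczi, transforming the Atiyah–Bott localisation sum
into an iterated residue.  For `1 ≤ k ≤ n`, pairwise distinct `λ₁,…,λₙ ∈ ℂ` and a homogeneous
polynomial `Q(z₁,…,z_k)`, the fixed point sum
`∑_σ Q(λ_{σ(1)},…,λ_{σ(k)}) / ∏_{m=1}^k ∏_{i ∉ {σ(1),…,σ(m)}} (λ_i − λ_{σ(m)})`
over injective maps `σ : {1,…,k} → {1,…,n}` equals the iterated residue at infinity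
`Res_{z=∞} ∏_{m<l}(z_m − z_l) Q(z) dz / ∏_{l=1}^k ∏_{i=1}^n (λ_i − z_l)`, i.e. for all
sufficiently large nested radii `R₁ ≪ ⋯ ≪ R_k` it equals
`(−1)^k (1/(2πi))^k` times the iterated contour integral. -/
theorem statement4 (n k : ℕ) (hk : 1 ≤ k) (hkn : k ≤ n)
    (lam : Fin n → ℂ) (hlam : Function.Injective lam)
    (d : ℕ) (Q : MvPolynomial (Fin k) ℂ) (hQ : Q.IsHomogeneous d) :
    NestedLarge k fun R =>
      (∑ σ : Fin k ↪ Fin n,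
          MvPolynomial.eval (fun m => lam (σ m)) Q /
            ∏ m : Fin k,
              ∏ i ∈ Finset.univ.filter (fun i : Fin n => ∀ m' : Fin k, m' ≤ m → σ m' ≠ i),
                (lam i - lam (σ m))) =
        (-1 : ℂ) ^ k * (1 / (2 * Real.pi * Complex.I)) ^ k *
          iteratedCircleIntegral k
            (fun z =>
              (∏ pr ∈ Finset.univ.filter (fun pr : Fin k × Fin k => pr.1 < pr.2),
                  (z pr.1 - z pr.2)) * MvPolynomial.eval z Q /
                ∏ l : Fin k, ∏ i : Fin n, (lam i - z l)) R := by
  classical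
  have hpair : ∀ g : Fin k → Fin k → ℂ,
      ∏ pr ∈ univ.filter (fun pr : Fin k × Fin k => pr.1 < pr.2), g pr.1 pr.2 =
        ∏ m : Fin k, ∏ m' ∈ univ.filter (fun m' => m' < m), g m' m := by
    intro g
    rw [← Finset.prod_sigma univ (fun m => univ.filter (fun m' => m' < m))
      (fun x => g x.2 x.1)]
    refine Finset.prod_nbij' (fun pr => ⟨pr.2, pr.1⟩) (fun x => (x.2, x.1)) ?_ ?_ ?_ ?_ ?_ <;>
      simp +contextual [Finset.mem_sigma, Finset.mem_filter]
  have hsplit : ∀ (σ : Fin k → Fin n), Function.Injective σ → ∀ m : Fin k,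
      ∏ i ∈ univ.erase (σ m), (lam i - lam (σ m)) =
        (∏ i ∈ univ.filter (fun i => ∀ m' : Fin k, m' ≤ m → σ m' ≠ i), (lam i - lam (σ m))) *
          ∏ m' ∈ univ.filter (fun m' => m' < m), (lam (σ m') - lam (σ m)) := by
    intro σ hσ m
    have himg : ∏ i ∈ (univ.filter fun m' => m' < m).image σ, (lam i - lam (σ m)) =
        ∏ m' ∈ univ.filter (fun m' => m' < m), (lam (σ m') - lam (σ m)) :=
      Finset.prod_image fun a _ b _ h => hσ h
    have hdisj : Disjoint (univ.filter (fun i => ∀ m' : Fin k, m' ≤ m → σ m' ≠ i))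
        ((univ.filter fun m' => m' < m).image σ) := by
      rw [Finset.disjoint_left]
      rintro i hi hj
      obtain ⟨m', hm', rfl⟩ := Finset.mem_image.mp hj
      exact (Finset.mem_filter.mp hi).2 m' (le_of_lt (Finset.mem_filter.mp hm').2) rfl
    have hunion : (univ.filter (fun i => ∀ m' : Fin k, m' ≤ m → σ m' ≠ i)) ∪
        ((univ.filter fun m' => m' < m).image σ) = univ.erase (σ m) := by
      ext i
      simp only [Finset.mem_union, Finset.mem_filter, Finset.mem_image, Finset.mem_erase,
        Finset.mem_univ, true_and, and_true]
      constructor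
      · rintro (h | ⟨m', ⟨hm', rfl⟩⟩)
        · exact fun hc => h m le_rfl hc.symm
        · exact fun hc => (ne_of_lt hm') (hσ hc)
      · intro hne
        by_cases hex : ∃ m', m' < m ∧ σ m' = i
        · exact Or.inr (by obtain ⟨m', h1, h2⟩ := hex; exact ⟨m', ⟨h1, h2⟩⟩)
        · push_neg at hex
          refine Or.inl fun m' hm' hc => ?_
          rcases lt_or_eq_of_le hm' with h | h
          · exact hex m' h hc
          · exact hne (h ▸ hc).symm
    rw [← himg, ← Finset.prod_union hdisj, hunion]
  apply nestedLarge_of_forall k _ (1 + ∑ i, ‖lam i‖)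
  intro R hRT
  have hcond : ∀ l, 0 < R l ∧ ∀ i, ‖lam i‖ < R l := by
    intro l
    have h1 : (0:ℝ) ≤ ∑ i, ‖lam i‖ :=
      Finset.sum_nonneg fun i _ => norm_nonneg _
    refine ⟨by linarith [hRT l], fun i => ?_⟩
    have h2 : ‖lam i‖ ≤ ∑ i, ‖lam i‖ :=
      Finset.single_le_sum (f := fun i => ‖lam i‖)
        (fun j _ => norm_nonneg _) (Finset.mem_univ i)
    linarith [hRT l]
  have hinteg : (fun z : Fin k → ℂ =>
      (∏ pr ∈ Finset.univ.filter (fun pr : Fin k × Fin k => pr.1 < pr.2), (z pr.1 - z pr.2)) *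
        MvPolynomial.eval z Q / ∏ l : Fin k, ∏ i : Fin n, (lam i - z l)) =
      fun z => MvPolynomial.eval z
        ((∏ pr ∈ Finset.univ.filter (fun pr : Fin k × Fin k => pr.1 < pr.2),
          (MvPolynomial.X pr.1 - MvPolynomial.X pr.2)) * Q) /
            ∏ l : Fin k, ∏ i : Fin n, (lam i - z l) := by
    funext z
    congr 2
    rw [map_mul, map_prod]
    simp
  rw [hinteg, claim n lam hlam k _ R hcond]
  have hcne : (2 * (Real.pi:ℂ) * Complex.I) ≠ 0 :=
    mul_ne_zero (mul_ne_zero two_ne_zero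
      (Complex.ofReal_ne_zero.mpr Real.pi_ne_zero)) Complex.I_ne_zero
  rw [show ((-1 : ℂ)) ^ k * (1 / (2 * Real.pi * Complex.I)) ^ k *
      ((-(2 * Real.pi * Complex.I)) ^ k * ∑ σ : Fin k → Fin n,
        MvPolynomial.eval (fun m => lam (σ m))
          ((∏ pr ∈ Finset.univ.filter (fun pr : Fin k × Fin k => pr.1 < pr.2),
            (MvPolynomial.X pr.1 - MvPolynomial.X pr.2)) * Q) /
          ∏ l, ∏ i ∈ Finset.univ.erase (σ l), (lam i - lam (σ l))) =
      ((-1 : ℂ) * (1 / (2 * Real.pi * Complex.I)) * -(2 * Real.pi * Complex.I)) ^ k *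
        ∑ σ : Fin k → Fin n,
          MvPolynomial.eval (fun m => lam (σ m))
            ((∏ pr ∈ Finset.univ.filter (fun pr : Fin k × Fin k => pr.1 < pr.2),
              (MvPolynomial.X pr.1 - MvPolynomial.X pr.2)) * Q) /
            ∏ l, ∏ i ∈ Finset.univ.erase (σ l), (lam i - lam (σ l)) by
    rw [mul_pow, mul_pow]; ring]
  rw [show ((-1 : ℂ) * (1 / (2 * Real.pi * Complex.I)) * -(2 * Real.pi * Complex.I)) = 1 by
    field_simp]
  rw [one_pow, one_mul]
  refine Eq.trans ?_ (Finset.sum_subset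
    (Finset.filter_subset (fun f : Fin k → Fin n => Function.Injective f) univ) ?_)
  · refine Finset.sum_bij' (fun (σ : Fin k ↪ Fin n) _ => (σ : Fin k → Fin n))
      (fun f hf => ⟨f, (Finset.mem_filter.mp hf).2⟩) ?_ ?_ ?_ ?_ ?_
    · exact fun σ _ => Finset.mem_filter.mpr ⟨Finset.mem_univ _, σ.injective⟩
    · exact fun f hf => Finset.mem_univ _
    · intro σ _; ext m; rfl
    · intro f hf; rfl
    · intro σ _
      try dsimp only
      have hVval : MvPolynomial.eval (fun m => lam (σ m))
          (∏ pr ∈ Finset.univ.filter (fun pr : Fin k × Fin k => pr.1 < pr.2),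
            (MvPolynomial.X pr.1 - MvPolynomial.X pr.2)) =
          ∏ pr ∈ Finset.univ.filter (fun pr : Fin k × Fin k => pr.1 < pr.2),
            (lam (σ pr.1) - lam (σ pr.2)) := by
        rw [map_prod]; simp
      have hVne : (∏ pr ∈ Finset.univ.filter (fun pr : Fin k × Fin k => pr.1 < pr.2),
          (lam (σ pr.1) - lam (σ pr.2))) ≠ 0 := by
        refine Finset.prod_ne_zero_iff.mpr fun pr hpr => sub_ne_zero.mpr fun hc => ?_
        exact absurd (hlam hc) (ne_of_lt (Finset.mem_filter.mp hpr).2 ∘ σ.injective.eq_iff.mp ∘ id) 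
      have hden : ∏ l, ∏ i ∈ Finset.univ.erase (σ l), (lam i - lam (σ l)) =
          (∏ pr ∈ Finset.univ.filter (fun pr : Fin k × Fin k => pr.1 < pr.2),
            (lam (σ pr.1) - lam (σ pr.2))) *
            ∏ m : Fin k, ∏ i ∈ Finset.univ.filter
              (fun i : Fin n => ∀ m' : Fin k, m' ≤ m → σ m' ≠ i), (lam i - lam (σ m)) := by
        rw [Finset.prod_congr rfl fun m _ => hsplit σ σ.injective m, Finset.prod_mul_distrib,
          hpair fun m' m => lam (σ m') - lam (σ m)]
        ring
      rw [map_mul, hVval, hden, mul_comm (∏ pr ∈ _, _)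
        (∏ m : Fin k, ∏ i ∈ _, _), mul_comm (∏ pr ∈ _, _) ((MvPolynomial.eval _) Q)]
      exact (mul_div_mul_right _ _ hVne).symm
  · intro f _ hf
    have hninj : ¬ Function.Injective f := fun h =>
      hf (Finset.mem_filter.mpr ⟨Finset.mem_univ _, h⟩)
    suffices hzero : MvPolynomial.eval (fun m => lam (f m))
        ((∏ pr ∈ Finset.univ.filter (fun pr : Fin k × Fin k => pr.1 < pr.2),
          (MvPolynomial.X pr.1 - MvPolynomial.X pr.2)) * Q) = 0 by
      rw [hzero, zero_div]
    rw [map_mul]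
    apply mul_eq_zero_of_left
    rw [map_prod]
    obtain ⟨a, b, hab, hne⟩ : ∃ a b, f a = f b ∧ a ≠ b := by
      rw [Function.Injective] at hninj
      push_neg at hninj
      obtain ⟨a, b, h1, h2⟩ := hninj
      exact ⟨a, b, h1, h2⟩
    rcases hne.lt_or_gt with h | h
    · refine Finset.prod_eq_zero (Finset.mem_filter.mpr ⟨Finset.mem_univ (a, b), h⟩) ?_
      simp [hab]
    · refine Finset.prod_eq_zero (Finset.mem_filter.mpr ⟨Finset.mem_univ (b, a), h⟩) ?_
      simp [hab]
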